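/- For all natural numbers n and m, if f ∈ B_n and g ∈ B_m then f·g ∈ B_{n+m}; that is, the family (B_n)_{n≥0} of subspaces of ℂ(x) is multiplicative, so B = ⊕_n B_n is a graded algebra. -/

import Mathlib

open Polynomial

/-- `J n = ∑_{i=0}^∞ ⌊n/2^i⌋`, which equals the finite sum over `i = 0, …, n`
since `⌊n/2^i⌋ = 0` whenever `2^i > n`. -/
def J (n : ℕ) : ℕ := ∑ i ∈ Finset.range (n + 1), n / 2 ^ i

/-- `P z n = ∏_{i=0}^∞ (x − z_i)^{⌊n/2^i⌋}` in `ℂ[x]`, which equals the finite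
product over `i = 0, …, n` since the exponent vanishes whenever `2^i > n`. -/
noncomputable def P (z : ℕ → ℂ) (n : ℕ) : Polynomial ℂ :=
  ∏ i ∈ Finset.range (n + 1), (X - C (z i)) ^ (n / 2 ^ i)

/-- `B_n = { Q(x)/P_n(x) : Q ∈ ℂ[x], deg Q ≤ J(n) }`, as a subset of the field
of rational functions `ℂ(x)`. -/
noncomputable def B (z : ℕ → ℂ) (n : ℕ) : Set (RatFunc ℂ) :=
  {f | ∃ Q : Polynomial ℂ, Q.natDegree ≤ J n ∧
    f = algebraMap (Polynomial ℂ) (RatFunc ℂ) Q /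
        algebraMap (Polynomial ℂ) (RatFunc ℂ) (P z n)}

lemma div_pow_eq_zero {n i : ℕ} (h : n < i) : n / 2 ^ i = 0 :=
  Nat.div_eq_of_lt (h.trans ((Nat.lt_two_pow_self (n := i))))

lemma J_ext (n N : ℕ) (h : n ≤ N) : J n = ∑ i ∈ Finset.range (N + 1), n / 2 ^ i := by
  refine Finset.sum_subset (Finset.range_subset_range.2 (by omega)) fun i _ hi => ?_
  exact div_pow_eq_zero (by simpa using hi)

lemma P_ext (z : ℕ → ℂ) (n N : ℕ) (h : n ≤ N) :
    P z n = ∏ i ∈ Finset.range (N + 1), (X - C (z i)) ^ (n / 2 ^ i) := by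
  refine Finset.prod_subset (Finset.range_subset_range.2 (by omega)) fun i _ hi => ?_
  rw [div_pow_eq_zero (by simpa using hi), pow_zero]

theorem B_mul_mem (z : ℕ → ℂ) (hz : Function.Injective z) (n m : ℕ)
    (f g : RatFunc ℂ) (hf : f ∈ B z n) (hg : g ∈ B z m) :
    f * g ∈ B z (n + m) := by
  obtain ⟨Q, hQ, hf⟩ := hf
  obtain ⟨R, hR, hg⟩ := hg
  set D : Polynomial ℂ :=
    ∏ i ∈ Finset.range (n + m + 1),
      (X - C (z i)) ^ ((n + m) / 2 ^ i - n / 2 ^ i - m / 2 ^ i) with hD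
  have hdivle : ∀ i : ℕ, n / 2 ^ i + m / 2 ^ i ≤ (n + m) / 2 ^ i := fun i =>
    Nat.add_div_le_add_div n m (2 ^ i)
  have key : P z (n + m) = P z n * P z m * D := by
    rw [P_ext z n (n + m) (by omega), P_ext z m (n + m) (by omega), hD,
      ← Finset.prod_mul_distrib, ← Finset.prod_mul_distrib, P]
    refine Finset.prod_congr rfl fun i _ => ?_
    rw [← pow_add, ← pow_add]
    congr 1
    have := hdivle i
    omega
  have hDmonic : D.Monic :=
    monic_prod_of_monic _ _ fun i _ => (monic_X_sub_C _).pow _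
  have hDdeg : D.natDegree ≤
      ∑ i ∈ Finset.range (n + m + 1), ((n + m) / 2 ^ i - n / 2 ^ i - m / 2 ^ i) := by
    refine (Polynomial.natDegree_prod_le _ _).trans (Finset.sum_le_sum fun i _ => ?_)
    simp [natDegree_pow]
  refine ⟨Q * R * D, ?_, ?_⟩
  · calc (Q * R * D).natDegree ≤ (Q * R).natDegree + D.natDegree := natDegree_mul_le
      _ ≤ Q.natDegree + R.natDegree + D.natDegree := by
          exact Nat.add_le_add_right natDegree_mul_le _
      _ ≤ J n + J m + ∑ i ∈ Finset.range (n + m + 1),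
            ((n + m) / 2 ^ i - n / 2 ^ i - m / 2 ^ i) :=
          add_le_add (add_le_add hQ hR) hDdeg
      _ = J (n + m) := by
          rw [J_ext n (n + m) (by omega), J_ext m (n + m) (by omega), J,
            ← Finset.sum_add_distrib, ← Finset.sum_add_distrib]
          refine Finset.sum_congr rfl fun i _ => ?_
          have := hdivle i
          omega
  · have hDne : algebraMap (Polynomial ℂ) (RatFunc ℂ) D ≠ 0 :=
      RatFunc.algebraMap_ne_zero hDmonic.ne_zero
    rw [hf, hg, key, map_mul, map_mul, map_mul, div_mul_div_comm,
      mul_div_mul_right _ _ hDne, map_mul]
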